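/- Let f : A → B be a homomorphism of commutative rings and J a radical ideal of B (i.e., J equals its own radical). If the ring A⋈^f J is reduced, then B is reduced (and A is reduced). -/

import Mathlib

/-- The amalgamation `A ⋈^f J = {(a, f a + j) | a ∈ A, j ∈ J}` of `A` with `B`
along the ideal `J` of `B`, with respect to the ring homomorphism `f : A → B`,
as a subring of the product ring `A × B`. -/
def amalgamation {A B : Type*} [CommRing A] [CommRing B] (f : A →+* B) (J : Ideal B) :
    Subring (A × B) where
  carrier := {x : A × B | ∃ a : A, ∃ j ∈ J, x = (a, f a + j)}
  one_mem' := ⟨1, 0, J.zero_mem, by simp [Prod.ext_iff]⟩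
  zero_mem' := ⟨0, 0, J.zero_mem, by simp [Prod.ext_iff]⟩
  mul_mem' := by
    rintro x y ⟨a, j, hj, rfl⟩ ⟨c, k, hk, rfl⟩
    refine ⟨a * c, f a * k + j * f c + j * k,
      J.add_mem (J.add_mem (J.mul_mem_left _ hk) (J.mul_mem_right _ hj)) (J.mul_mem_right _ hj),
      ?_⟩
    simp only [Prod.mk_mul_mk, map_mul, Prod.mk.injEq]
    exact ⟨trivial, by ring⟩
  add_mem' := by
    rintro x y ⟨a, j, hj, rfl⟩ ⟨c, k, hk, rfl⟩
    refine ⟨a + c, j + k, J.add_mem hj hk, ?_⟩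
    simp only [Prod.mk_add_mk, map_add, Prod.mk.injEq]
    exact ⟨trivial, by ring⟩
  neg_mem' := by
    rintro x ⟨a, j, hj, rfl⟩
    refine ⟨-a, -j, J.neg_mem hj, ?_⟩
    simp only [Prod.neg_mk, map_neg, Prod.mk.injEq]
    exact ⟨trivial, by ring⟩

theorem statement6 {A B : Type*} [CommRing A] [CommRing B] (f : A →+* B) (J : Ideal B)
    (hJ : J.radical = J) (hred : IsReduced ↥(amalgamation f J)) :
    IsReduced B ∧ IsReduced A := by
  constructor
  · refine ⟨fun b hb => ?_⟩
    obtain ⟨n, hn⟩ := hb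
    have hbJ : b ∈ J := by
      rw [← hJ]
      exact ⟨n, hn ▸ J.zero_mem⟩
    have hmem : ((0 : A), b) ∈ amalgamation f J := ⟨0, b, hbJ, by simp⟩
    have hn' : b ^ (n + 1) = 0 := by rw [pow_succ, hn, zero_mul]
    have hnil : IsNilpotent (⟨((0 : A), b), hmem⟩ : amalgamation f J) := by
      refine ⟨n + 1, ?_⟩
      ext
      · simp
      · simpa using hn'
    have := hnil.eq_zero
    have h2 : (((0 : A), b) : A × B) = 0 := congrArg Subtype.val this
    exact (Prod.mk.injEq _ _ _ _ ▸ h2).2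
  · refine ⟨fun a ha => ?_⟩
    obtain ⟨n, hn⟩ := ha
    have hmem : (a, f a) ∈ amalgamation f J := ⟨a, 0, J.zero_mem, by simp⟩
    have hn' : a ^ (n + 1) = 0 := by rw [pow_succ, hn, zero_mul]
    have hnil : IsNilpotent (⟨(a, f a), hmem⟩ : amalgamation f J) := by
      refine ⟨n + 1, ?_⟩
      ext
      · simpa using hn'
      · simp [← map_pow, hn']
    have := hnil.eq_zero
    have h2 : ((a, f a) : A × B) = 0 := congrArg Subtype.val this
    exact (Prod.mk.injEq _ _ _ _ ▸ h2).1
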